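/- arXiv:2002.07624 — 4 statements merged into one kernel-verified Lean document; each statement's English description precedes it below -/
import Mathlib

section
/- For orthonormal matrices H1, H2 in O(p,r), it holds that (1/√2)·‖H1 H1ᵀ − H2 H2ᵀ‖_F ≤ inf over O in the orthogonal group O(r) of ‖H1 − H2·O‖_F ≤ ‖H1 H1ᵀ − H2 H2ᵀ‖_F. -/
open Matrix

/-- Frobenius norm of a real matrix. -/
noncomputable def frob {m n : ℕ} (A : Matrix (Fin m) (Fin n) ℝ) : ℝ :=
  Real.sqrt (∑ i, ∑ j, (A i j) ^ 2)

namespace ProcAux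

lemma dot_sq_le {n : ℕ} (x y : Fin n → ℝ) :
    (x ⬝ᵥ y) ^ 2 ≤ (x ⬝ᵥ x) * (y ⬝ᵥ y) := by
  simpa [dotProduct, sq] using Finset.sum_mul_sq_le_sq_mul_sq Finset.univ x y

lemma trace_tAA {m n : ℕ} (A : Matrix (Fin m) (Fin n) ℝ) :
    trace (Aᵀ * A) = ∑ i, ∑ j, A i j ^ 2 := by
  rw [Finset.sum_comm]
  simp [trace, Matrix.mul_apply, Matrix.diag, sq]

lemma trace_tAA_nonneg {m n : ℕ} (A : Matrix (Fin m) (Fin n) ℝ) :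
    0 ≤ trace (Aᵀ * A) := by
  rw [trace_tAA]
  positivity

lemma frob_eq {m n : ℕ} (A : Matrix (Fin m) (Fin n) ℝ) :
    Real.sqrt (∑ i, ∑ j, (A i j) ^ 2) = Real.sqrt (trace (Aᵀ * A)) := by
  rw [trace_tAA]

lemma isHerm_of_symm {n : ℕ} {A : Matrix (Fin n) (Fin n) ℝ} (h : Aᵀ = A) :
    A.IsHermitian := by
  rwa [IsHermitian, conjTranspose_eq_transpose_of_trivial]

lemma psd_trace_nonneg {n : ℕ} {A : Matrix (Fin n) (Fin n) ℝ} (hA : A.PosSemidef) :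
    0 ≤ trace A := by
  exact hA.trace_nonneg

lemma psd_sqrt {n : ℕ} {B : Matrix (Fin n) (Fin n) ℝ} (hB : B.PosSemidef) :
    ∃ C : Matrix (Fin n) (Fin n) ℝ, C.PosSemidef ∧ C * C = B := by
  open scoped MatrixOrder in
  exact ⟨CFC.sqrt B, (CFC.sqrt_nonneg B).posSemidef, CFC.sqrt_mul_sqrt_self B hB.nonneg⟩

lemma trace_mul_psd {n : ℕ} {A B : Matrix (Fin n) (Fin n) ℝ}
    (hA : A.PosSemidef) (hB : B.PosSemidef) : 0 ≤ trace (A * B) := by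
  obtain ⟨S, hs, h1⟩ := psd_sqrt hA
  have h2 : trace (A * B) = trace (S * B * S) := by
    conv_lhs => rw [← h1]
    rw [Matrix.mul_assoc, Matrix.trace_mul_comm, Matrix.mul_assoc]
  rw [h2]
  have := (hB.conjTranspose_mul_mul_same S)
  rw [hs.1] at this
  exact psd_trace_nonneg this


lemma dot_tAA {m n : ℕ} (A : Matrix (Fin m) (Fin n) ℝ) (x : Fin n → ℝ) :
    x ⬝ᵥ ((Aᵀ * A) *ᵥ x) = (A *ᵥ x) ⬝ᵥ (A *ᵥ x) := by
  rw [← Matrix.mulVec_mulVec, Matrix.dotProduct_mulVec, Matrix.vecMul_transpose]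

lemma trace_sub_sub {m n : ℕ} (A B : Matrix (Fin m) (Fin n) ℝ) :
    trace ((A - B)ᵀ * (A - B)) =
      trace (Aᵀ * A) - 2 * trace (Bᵀ * A) + trace (Bᵀ * B) := by
  have h : trace (Aᵀ * B) = trace (Bᵀ * A) := by
    rw [← Matrix.trace_transpose (Aᵀ * B), Matrix.transpose_mul, Matrix.transpose_transpose]
  simp only [Matrix.transpose_sub, Matrix.sub_mul, Matrix.mul_sub, Matrix.trace_sub]
  rw [h]; ring

/-- Cauchy–Schwarz contraction: if `C` is PSD with `C * C = B` and the quadratic form of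
`B` is bounded by `c^2`, then the quadratic form of `C` is bounded by `c`. -/
lemma sqrt_dom {n : ℕ} {C B : Matrix (Fin n) (Fin n) ℝ} (hC : C.PosSemidef)
    (hCB : C * C = B) (c : ℝ) (hc : 0 ≤ c)
    (hB : ∀ x : Fin n → ℝ, x ⬝ᵥ (B *ᵥ x) ≤ c ^ 2 * (x ⬝ᵥ x)) :
    ∀ x : Fin n → ℝ, x ⬝ᵥ (C *ᵥ x) ≤ c * (x ⬝ᵥ x) := by
  intro x
  have hCt : Cᵀ = C := by
    rw [← conjTranspose_eq_transpose_of_trivial]; exact hC.1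
  have hyy : (C *ᵥ x) ⬝ᵥ (C *ᵥ x) = x ⬝ᵥ (B *ᵥ x) := by
    have h := dot_tAA C x
    rw [hCt, hCB] at h
    exact h.symm
  have h0 : 0 ≤ x ⬝ᵥ (C *ᵥ x) := by simpa using hC.dotProduct_mulVec_nonneg x
  have hx0 : 0 ≤ x ⬝ᵥ x := by
    simp only [dotProduct]
    exact Finset.sum_nonneg fun i _ => mul_self_nonneg (x i)
  have hcs : (x ⬝ᵥ (C *ᵥ x)) ^ 2 ≤ (x ⬝ᵥ x) * ((C *ᵥ x) ⬝ᵥ (C *ᵥ x)) := dot_sq_le x _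
  rw [hyy] at hcs
  have hb := hB x
  have hsq : (x ⬝ᵥ (C *ᵥ x)) ^ 2 ≤ (c * (x ⬝ᵥ x)) ^ 2 := by nlinarith
  exact (pow_le_pow_iff_left₀ h0 (by positivity) two_ne_zero).mp hsq

/-- Existence of small `δ` making `M + δ•1` invertible. -/
lemma exists_delta {n : ℕ} (M : Matrix (Fin n) (Fin n) ℝ) {d : ℝ} (hd : 0 < d) :
    ∃ δ : ℝ, 0 < δ ∧ δ ≤ d ∧ IsUnit (M + δ • (1 : Matrix (Fin n) (Fin n) ℝ)).det := by
  classical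
  set q := (-M).charpoly with hq
  have hq0 : q ≠ 0 := (Matrix.charpoly_monic _).ne_zero
  have hroots : {x : ℝ | q.IsRoot x}.Finite := Polynomial.finite_setOf_isRoot hq0
  have hIoo : (Set.Ioo (0:ℝ) d).Infinite := Set.Ioo_infinite hd
  obtain ⟨δ, hδ⟩ := (hIoo.diff hroots).nonempty
  refine ⟨δ, hδ.1.1, le_of_lt hδ.1.2, ?_⟩
  have heval : Polynomial.eval δ q = (M + δ • (1 : Matrix (Fin n) (Fin n) ℝ)).det := by
    rw [hq, Matrix.charpoly, ← Polynomial.coe_evalRingHom, RingHom.map_det]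
    congr 1
    ext i j
    by_cases hij : i = j
    · subst hij
      simp [Matrix.charmatrix_apply, Matrix.map_apply, Matrix.one_apply, Matrix.smul_apply]
      ring
    · simp [Matrix.charmatrix_apply, Matrix.map_apply, Matrix.one_apply, hij,
        Matrix.smul_apply]
  rw [isUnit_iff_ne_zero, ← heval]
  exact hδ.2

lemma sqrt_add_le_aux (a e : ℝ) (ha : 0 ≤ a) (he : 0 ≤ e) :
    Real.sqrt (a + e ^ 2) ≤ Real.sqrt a + e := by
  rw [show Real.sqrt a + e = Real.sqrt ((Real.sqrt a + e) ^ 2) from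
    (Real.sqrt_sq (by positivity)).symm]
  apply Real.sqrt_le_sqrt
  nlinarith [Real.sq_sqrt ha, Real.sqrt_nonneg a]

lemma key_arith {rr s δ ε tM tB tC tO : ℝ}
    (hr : 0 ≤ rr) (hs0 : 0 ≤ s) (hsr : s ≤ rr) (hδ0 : 0 < δ) (hδ1 : δ ≤ 1)
    (h10 : δ * (10 * rr + 10) ≤ ε ^ 2)
    (htB : tB = s + 2 * δ * tM + δ ^ 2 * rr)
    (htM : 0 ≤ rr + 2 * tM + s)
    (hCB : 0 ≤ (1 + δ) * tC - tB) (hG : tC ≤ (1 + δ) * rr) (hC0 : 0 ≤ tC)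
    (hO1 : tO ≤ rr) (hO2 : -rr ≤ tO) :
    s - ε ^ 2 / 2 ≤ tC - δ * tO := by
  nlinarith [mul_nonneg hδ0.le htM, mul_nonneg hδ0.le (sub_nonneg.mpr hsr),
    mul_nonneg hδ0.le (sub_nonneg.mpr hO1), mul_nonneg hδ0.le (sub_nonneg.mpr hG),
    mul_nonneg hδ0.le hδ0.le, mul_nonneg hδ0.le hr]

end ProcAux

open Matrix ProcAux in
/-- For `H1, H2 ∈ O(p,r)`,
`(1/√2)·‖H1H1ᵀ − H2H2ᵀ‖_F ≤ inf_{O ∈ O(r)} ‖H1 − H2 O‖_F ≤ ‖H1H1ᵀ − H2H2ᵀ‖_F`. -/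
theorem projection_dist_procrustes {p r : ℕ} (H1 H2 : Matrix (Fin p) (Fin r) ℝ)
    (h1 : H1ᵀ * H1 = 1) (h2 : H2ᵀ * H2 = 1) :
    (1 / Real.sqrt 2) * frob (H1 * H1ᵀ - H2 * H2ᵀ) ≤
      sInf {x : ℝ | ∃ O : Matrix (Fin r) (Fin r) ℝ, Oᵀ * O = 1 ∧ x = frob (H1 - H2 * O)} ∧
    sInf {x : ℝ | ∃ O : Matrix (Fin r) (Fin r) ℝ, Oᵀ * O = 1 ∧ x = frob (H1 - H2 * O)} ≤
      frob (H1 * H1ᵀ - H2 * H2ᵀ) := by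
  classical
  set M : Matrix (Fin r) (Fin r) ℝ := H2ᵀ * H1 with hM
  set s : ℝ := trace (Mᵀ * M) with hs
  have hrr : trace (1 : Matrix (Fin r) (Fin r) ℝ) = (r : ℝ) := by
    simp [Matrix.trace_one]
  have hMt : Mᵀ = H1ᵀ * H2 := by rw [hM, transpose_mul, transpose_transpose]
  -- `1 - H2 H2ᵀ` is PSD
  have hproj : ((1 : Matrix (Fin p) (Fin p) ℝ) - H2 * H2ᵀ)ᵀ *
      ((1 : Matrix (Fin p) (Fin p) ℝ) - H2 * H2ᵀ) = 1 - H2 * H2ᵀ := by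
    have hPP : H2 * H2ᵀ * (H2 * H2ᵀ) = H2 * H2ᵀ := by
      rw [Matrix.mul_assoc, ← Matrix.mul_assoc H2ᵀ H2 H2ᵀ, h2, Matrix.one_mul]
    simp only [Matrix.transpose_sub, Matrix.transpose_one, Matrix.transpose_mul,
      Matrix.transpose_transpose, Matrix.sub_mul, Matrix.mul_sub, Matrix.one_mul,
      Matrix.mul_one, hPP]
    abel
  have hPSD1 : PosSemidef ((1 : Matrix (Fin p) (Fin p) ℝ) - H2 * H2ᵀ) := by
    have := Matrix.posSemidef_conjTranspose_mul_self
      ((1 : Matrix (Fin p) (Fin p) ℝ) - H2 * H2ᵀ)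
    rwa [conjTranspose_eq_transpose_of_trivial, hproj] at this
  have hIMM : (1 : Matrix (Fin r) (Fin r) ℝ) - Mᵀ * M =
      H1ᵀ * ((1 : Matrix (Fin p) (Fin p) ℝ) - H2 * H2ᵀ) * H1 := by
    rw [hMt, hM, Matrix.mul_sub, Matrix.mul_one, Matrix.sub_mul, h1]
    congr 1
    simp only [Matrix.mul_assoc]
  have hPSD2 : PosSemidef ((1 : Matrix (Fin r) (Fin r) ℝ) - Mᵀ * M) := by
    rw [hIMM]
    have := hPSD1.conjTranspose_mul_mul_same H1
    rwa [conjTranspose_eq_transpose_of_trivial] at this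
  have hs0 : 0 ≤ s := trace_tAA_nonneg M
  have hsr : s ≤ (r : ℝ) := by
    have := psd_trace_nonneg hPSD2
    rw [Matrix.trace_sub, hrr, ← hs] at this
    linarith
  -- trace of a generic Procrustes difference
  have htO : ∀ O : Matrix (Fin r) (Fin r) ℝ, trace (Oᵀ * M) = trace (Mᵀ * O) := by
    intro O
    rw [← Matrix.trace_transpose (Mᵀ * O), Matrix.transpose_mul, Matrix.transpose_transpose]
  have hF2 : ∀ O : Matrix (Fin r) (Fin r) ℝ, Oᵀ * O = 1 →
      trace ((H1 - H2 * O)ᵀ * (H1 - H2 * O)) = 2 * r - 2 * trace (Mᵀ * O) := by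
    intro O hO
    rw [trace_sub_sub, h1, hrr]
    have e1 : (H2 * O)ᵀ * (H2 * O) = 1 := by
      rw [Matrix.transpose_mul, Matrix.mul_assoc, ← Matrix.mul_assoc H2ᵀ H2 O, h2,
        Matrix.one_mul, hO]
    have e2 : (H2 * O)ᵀ * H1 = Oᵀ * M := by
      rw [Matrix.transpose_mul, Matrix.mul_assoc, hM]
    rw [e1, e2, hrr, htO O]
    ring
  -- trace of the projection difference
  have hc0 : trace ((H1 * H1ᵀ - H2 * H2ᵀ)ᵀ * (H1 * H1ᵀ - H2 * H2ᵀ)) = 2 * r - 2 * s := by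
    rw [trace_sub_sub]
    have e1 : (H1 * H1ᵀ)ᵀ * (H1 * H1ᵀ) = H1 * H1ᵀ := by
      rw [Matrix.transpose_mul, Matrix.transpose_transpose, Matrix.mul_assoc,
        ← Matrix.mul_assoc H1ᵀ H1 H1ᵀ, h1, Matrix.one_mul]
    have e2 : (H2 * H2ᵀ)ᵀ * (H2 * H2ᵀ) = H2 * H2ᵀ := by
      rw [Matrix.transpose_mul, Matrix.transpose_transpose, Matrix.mul_assoc,
        ← Matrix.mul_assoc H2ᵀ H2 H2ᵀ, h2, Matrix.one_mul]
    have e3 : trace (H1 * H1ᵀ) = (r : ℝ) := by rw [Matrix.trace_mul_comm, h1, hrr]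
    have e4 : trace (H2 * H2ᵀ) = (r : ℝ) := by rw [Matrix.trace_mul_comm, h2, hrr]
    have e5 : trace ((H2 * H2ᵀ)ᵀ * (H1 * H1ᵀ)) = s := by
      rw [Matrix.transpose_mul, Matrix.transpose_transpose, hs]
      rw [show H2 * H2ᵀ * (H1 * H1ᵀ) = H2 * (H2ᵀ * H1 * H1ᵀ) by
        simp only [Matrix.mul_assoc]]
      rw [Matrix.trace_mul_comm, show H2ᵀ * H1 * H1ᵀ * H2 = M * Mᵀ by
        rw [hM, hMt]; simp only [Matrix.mul_assoc]]
      exact Matrix.trace_mul_comm M Mᵀ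
    rw [e1, e2, e3, e4, e5]
    ring
  have hbdd : BddBelow {x : ℝ | ∃ O : Matrix (Fin r) (Fin r) ℝ,
      Oᵀ * O = 1 ∧ x = frob (H1 - H2 * O)} := by
    refine ⟨0, ?_⟩
    rintro x ⟨O, hO, rfl⟩
    exact Real.sqrt_nonneg _
  have hne : Set.Nonempty {x : ℝ | ∃ O : Matrix (Fin r) (Fin r) ℝ,
      Oᵀ * O = 1 ∧ x = frob (H1 - H2 * O)} :=
    ⟨frob (H1 - H2 * 1), 1, by simp, rfl⟩
  constructor
  · -- lower bound
    apply le_csInf hne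
    rintro b ⟨O, hO, rfl⟩
    have ht := hF2 O hO
    have h2t : 2 * trace (Mᵀ * O) ≤ s + r := by
      have h := trace_tAA_nonneg (M - O)
      rw [trace_sub_sub, ← hs, htO O, hO, hrr] at h
      linarith
    have hFnn : (0 : ℝ) ≤ 2 * r - 2 * trace (Mᵀ * O) := by
      rw [← ht]; exact trace_tAA_nonneg _
    unfold frob
    rw [frob_eq, frob_eq, hc0, ht, one_div, ← Real.sqrt_inv,
      ← Real.sqrt_mul (by norm_num : (0:ℝ) ≤ (2:ℝ)⁻¹)]
    apply Real.sqrt_le_sqrt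
    nlinarith
  · -- upper bound
    apply le_of_forall_pos_le_add
    intro ε hε
    have hd0 : (0 : ℝ) < min 1 (ε ^ 2 / (10 * r + 10)) := by positivity
    obtain ⟨δ, hδ0, hδd, hdet⟩ := exists_delta M hd0
    have hδ1 : δ ≤ 1 := hδd.trans (min_le_left _ _)
    have hδε : δ ≤ ε ^ 2 / (10 * r + 10) := hδd.trans (min_le_right _ _)
    set N : Matrix (Fin r) (Fin r) ℝ := M + δ • 1 with hN
    set B : Matrix (Fin r) (Fin r) ℝ := Nᵀ * N with hB
    have hBpsd : B.PosSemidef := by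
      have := Matrix.posSemidef_conjTranspose_mul_self N
      rwa [conjTranspose_eq_transpose_of_trivial] at this
    obtain ⟨C, hCpsd, hCt, hCC⟩ :
        ∃ C : Matrix (Fin r) (Fin r) ℝ, C.PosSemidef ∧ Cᵀ = C ∧ C * C = B := by
      obtain ⟨C0, hC0, hC0C⟩ := psd_sqrt hBpsd
      refine ⟨C0, hC0, ?_, hC0C⟩
      rw [← conjTranspose_eq_transpose_of_trivial]
      exact hC0.1
    have hdetC : IsUnit C.det := by
      rw [isUnit_iff_ne_zero]
      intro h0
      have : B.det = 0 := by rw [← hCC, Matrix.det_mul, h0, mul_zero]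
      rw [hB, Matrix.det_mul, Matrix.det_transpose] at this
      rw [isUnit_iff_ne_zero] at hdet
      exact hdet (by nlinarith)
    set O : Matrix (Fin r) (Fin r) ℝ := N * C⁻¹ with hO
    have hNC : Nᵀ * O = C := by
      rw [hO, ← Matrix.mul_assoc, ← hB, ← hCC, Matrix.mul_assoc,
        Matrix.mul_nonsing_inv C hdetC, Matrix.mul_one]
    have hOorth : Oᵀ * O = 1 := by
      rw [hO, Matrix.transpose_mul, Matrix.transpose_nonsing_inv, hCt, Matrix.mul_assoc,
        ← Matrix.mul_assoc Nᵀ N C⁻¹, ← hB, ← hCC, Matrix.mul_assoc,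
        Matrix.mul_nonsing_inv C hdetC, Matrix.mul_one, Matrix.nonsing_inv_mul C hdetC]
    -- the trace of `Mᵀ * O`
    have hNt : Nᵀ = Mᵀ + δ • 1 := by
      rw [hN, Matrix.transpose_add, Matrix.transpose_smul, Matrix.transpose_one]
    have htMO : trace (Mᵀ * O) = trace C - δ * trace O := by
      have : Mᵀ * O = Nᵀ * O - δ • O := by
        rw [hNt, Matrix.add_mul, Matrix.smul_mul, Matrix.one_mul]
        abel
      rw [this, Matrix.trace_sub, hNC, Matrix.trace_smul, smul_eq_mul]
    -- trace bounds
    have htrB : trace B = s + 2 * δ * trace M + δ ^ 2 * r := by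
      have hBexp : B = Mᵀ * M + δ • Mᵀ + δ • M + (δ * δ) • (1 : Matrix (Fin r) (Fin r) ℝ) := by
        rw [hB, hNt, hN]
        simp only [Matrix.add_mul, Matrix.mul_add, Matrix.smul_mul, Matrix.mul_smul,
          Matrix.one_mul, Matrix.mul_one, smul_smul, smul_add]
        abel
      rw [hBexp]
      simp only [Matrix.trace_add, Matrix.trace_smul, Matrix.trace_transpose, hrr, ← hs,
        smul_eq_mul]
      ring
    have htrM : 0 ≤ (r : ℝ) + 2 * trace M + s := by
      have h := trace_tAA_nonneg ((1 : Matrix (Fin r) (Fin r) ℝ) - (-M))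
      rw [trace_sub_sub] at h
      simp only [Matrix.transpose_one, Matrix.transpose_neg, Matrix.mul_one, Matrix.one_mul,
        Matrix.neg_mul, Matrix.mul_neg, neg_neg, Matrix.trace_neg, Matrix.trace_transpose,
        hrr, ← hs] at h
      linarith
    have htrO1 : trace O ≤ (r : ℝ) := by
      have h := trace_tAA_nonneg ((1 : Matrix (Fin r) (Fin r) ℝ) - O)
      rw [trace_sub_sub] at h
      simp only [Matrix.transpose_one, Matrix.mul_one, Matrix.one_mul, hOorth, hrr,
        Matrix.trace_transpose] at h
      linarith
    have htrO2 : -(r : ℝ) ≤ trace O := by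
      have h := trace_tAA_nonneg ((1 : Matrix (Fin r) (Fin r) ℝ) - (-O))
      rw [trace_sub_sub] at h
      simp only [Matrix.transpose_one, Matrix.mul_one, Matrix.one_mul, Matrix.transpose_neg,
        Matrix.neg_mul, Matrix.mul_neg, neg_neg, hOorth, hrr, Matrix.trace_transpose,
        Matrix.trace_neg] at h
      linarith
    -- quadratic bound for B
    have hBquad : ∀ x : Fin r → ℝ, x ⬝ᵥ (B *ᵥ x) ≤ (1 + δ) ^ 2 * (x ⬝ᵥ x) := by
      intro x
      rw [hB, dot_tAA]
      have hNx : N *ᵥ x = M *ᵥ x + δ • x := by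
        rw [hN, Matrix.add_mulVec, Matrix.smul_mulVec, Matrix.one_mulVec]
      have hx0 : 0 ≤ x ⬝ᵥ x := by
        simp only [dotProduct]
        exact Finset.sum_nonneg fun i _ => mul_self_nonneg (x i)
      have hMM : (M *ᵥ x) ⬝ᵥ (M *ᵥ x) ≤ x ⬝ᵥ x := by
        have h := hPSD2.dotProduct_mulVec_nonneg x
        simp only [star_trivial, Matrix.sub_mulVec, Matrix.one_mulVec, dotProduct_sub] at h
        rw [dot_tAA] at h
        linarith
      have hxu : x ⬝ᵥ (M *ᵥ x) ≤ x ⬝ᵥ x := by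
        have hcs := dot_sq_le x (M *ᵥ x)
        nlinarith
      rw [hNx]
      simp only [dotProduct_add, add_dotProduct, dotProduct_smul, smul_dotProduct,
        smul_eq_mul]
      have hcomm : (M *ᵥ x) ⬝ᵥ x = x ⬝ᵥ (M *ᵥ x) := dotProduct_comm _ _
      nlinarith
    have hCdom := sqrt_dom hCpsd hCC (1 + δ) (by linarith) hBquad
    have hGpsd : PosSemidef ((1 + δ) • (1 : Matrix (Fin r) (Fin r) ℝ) - C) := by
      refine Matrix.PosSemidef.of_dotProduct_mulVec_nonneg ?_ ?_
      · apply isHerm_of_symm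
        rw [Matrix.transpose_sub, Matrix.transpose_smul, Matrix.transpose_one, hCt]
      · intro x
        have h := hCdom x
        simp only [star_trivial, Matrix.sub_mulVec, Matrix.smul_mulVec,
          Matrix.one_mulVec, dotProduct_sub, dotProduct_smul, smul_eq_mul]
        linarith
    have htrCB : 0 ≤ (1 + δ) * trace C - trace B := by
      have h := trace_mul_psd hCpsd hGpsd
      rw [Matrix.mul_sub, Matrix.mul_smul, Matrix.mul_one, hCC, Matrix.trace_sub,
        Matrix.trace_smul, smul_eq_mul] at h
      linarith
    have htrG : trace C ≤ (1 + δ) * r := by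
      have h := psd_trace_nonneg hGpsd
      rw [Matrix.trace_sub, Matrix.trace_smul, hrr, smul_eq_mul] at h
      linarith
    have htrC0 : 0 ≤ trace C := psd_trace_nonneg hCpsd
    -- the quantitative bound
    have hrpos : (0 : ℝ) ≤ (r : ℝ) := Nat.cast_nonneg r
    have hkey : s - ε ^ 2 / 2 ≤ trace (Mᵀ * O) := by
      rw [htMO]
      have h10 : δ * (10 * (r : ℝ) + 10) ≤ ε ^ 2 :=
        (le_div_iff₀ (by positivity : (0:ℝ) < 10 * (r : ℝ) + 10)).mp hδε
      exact key_arith hrpos hs0 hsr hδ0 hδ1 h10 htrB htrM htrCB htrG htrC0 htrO1 htrO2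
    -- conclude
    have hless : trace ((H1 - H2 * O)ᵀ * (H1 - H2 * O)) ≤
        trace ((H1 * H1ᵀ - H2 * H2ᵀ)ᵀ * (H1 * H1ᵀ - H2 * H2ᵀ)) + ε ^ 2 := by
      rw [hF2 O hOorth, hc0]
      linarith
    have hstep : sInf {x : ℝ | ∃ O : Matrix (Fin r) (Fin r) ℝ,
        Oᵀ * O = 1 ∧ x = frob (H1 - H2 * O)} ≤ frob (H1 - H2 * O) :=
      csInf_le hbdd ⟨O, hOorth, rfl⟩
    refine hstep.trans ?_
    unfold frob
    rw [frob_eq, frob_eq]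
    have hc0nn : 0 ≤ trace ((H1 * H1ᵀ - H2 * H2ᵀ)ᵀ * (H1 * H1ᵀ - H2 * H2ᵀ)) :=
      trace_tAA_nonneg _
    exact (Real.sqrt_le_sqrt hless).trans (sqrt_add_le_aux _ ε hc0nn hε.le)
end

section
/- Let U ∈ O(p1, r) and Γ = diag(λ1, ..., λr) with λ1 ≥ ... ≥ λr > 0. Then for any W ∈ O(p1, r), (λr²/2)·‖UUᵀ − WWᵀ‖_F² ≤ ⟨U Γ² Uᵀ, UUᵀ − WWᵀ⟩ ≤ (λ1²/2)·‖UUᵀ − WWᵀ‖_F², where ⟨A, B⟩ = tr(Aᵀ B). -/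
open Matrix

/-- For `U, W ∈ O(p1,r)` and `Γ = diag(λ1,...,λr)` with `λ1 ≥ ... ≥ λr > 0`,
`(λr²/2)‖UUᵀ−WWᵀ‖_F² ≤ ⟨UΓ²Uᵀ, UUᵀ−WWᵀ⟩ ≤ (λ1²/2)‖UUᵀ−WWᵀ‖_F²`. -/
theorem quadratic_form_bounds {p1 r : ℕ} (hr : 0 < r)
    (U W : Matrix (Fin p1) (Fin r) ℝ)
    (hU : Uᵀ * U = 1) (hW : Wᵀ * W = 1)
    (l : Fin r → ℝ) (hpos : ∀ i, 0 < l i)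
    (hmono : ∀ i j : Fin r, i ≤ j → l j ≤ l i) :
    (l ⟨r - 1, by omega⟩) ^ 2 / 2 * frob (U * Uᵀ - W * Wᵀ) ^ 2 ≤
      trace ((U * diagonal (fun i => (l i) ^ 2) * Uᵀ)ᵀ * (U * Uᵀ - W * Wᵀ)) ∧
    trace ((U * diagonal (fun i => (l i) ^ 2) * Uᵀ)ᵀ * (U * Uᵀ - W * Wᵀ)) ≤
      (l ⟨0, hr⟩) ^ 2 / 2 * frob (U * Uᵀ - W * Wᵀ) ^ 2 := by
  set P := U * Uᵀ with hP
  set Q := W * Wᵀ with hQ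
  set G := diagonal (fun i => (l i) ^ 2) with hG
  set D := P - Q with hDdef
  set M := Uᵀ * D * U with hMdef
  -- basic facts
  have hPt : Pᵀ = P := by rw [hP, transpose_mul, transpose_transpose]
  have hQt : Qᵀ = Q := by rw [hQ, transpose_mul, transpose_transpose]
  have hDt : Dᵀ = D := by rw [hDdef, transpose_sub, hPt, hQt]
  have hPP : P * P = P := by
    rw [hP, Matrix.mul_assoc, ← Matrix.mul_assoc Uᵀ, hU, Matrix.one_mul]
  have hQQ : Q * Q = Q := by
    rw [hQ, Matrix.mul_assoc, ← Matrix.mul_assoc Wᵀ, hW, Matrix.one_mul]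
  have hUP : Uᵀ * P = Uᵀ := by rw [hP, ← Matrix.mul_assoc, hU, Matrix.one_mul]
  -- M is a Gram matrix
  set C := (1 - Q) * U with hC
  have hQ1 : (1 - Q) * (1 - Q) = 1 - Q := by
    rw [Matrix.mul_sub, Matrix.sub_mul, Matrix.sub_mul, hQQ, Matrix.one_mul,
      Matrix.one_mul, Matrix.mul_one]
    abel
  have hCt : Cᵀ = Uᵀ * (1 - Q) := by
    rw [hC, transpose_mul, transpose_sub, transpose_one, hQt]
  have hCM : Cᵀ * C = M := by
    have h1 : Cᵀ * C = Uᵀ * ((1 - Q) * (1 - Q)) * U := by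
      rw [hCt, hC, Matrix.mul_assoc, Matrix.mul_assoc, Matrix.mul_assoc]
    rw [h1, hQ1, hMdef, hDdef]
    rw [Matrix.mul_sub, Matrix.mul_sub, hUP, Matrix.mul_one]
  have hMnn : ∀ i, 0 ≤ M i i := by
    intro i
    rw [← hCM, Matrix.mul_apply]
    exact Finset.sum_nonneg fun k _ => by
      simpa [Matrix.transpose_apply] using mul_self_nonneg (C k i)
  -- trace identity for the inner product
  have hTr : trace ((U * G * Uᵀ)ᵀ * D) = ∑ i, l i ^ 2 * M i i := by
    have hsym : (U * G * Uᵀ)ᵀ = U * G * Uᵀ := by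
      rw [transpose_mul, transpose_mul, transpose_transpose, hG,
        diagonal_transpose, Matrix.mul_assoc]
    rw [hsym]
    have h1 : U * G * Uᵀ * D = U * (G * (Uᵀ * D)) := by
      simp only [Matrix.mul_assoc]
    rw [h1, Matrix.trace_mul_comm]
    have h2 : G * (Uᵀ * D) * U = G * M := by
      rw [hMdef]; simp only [Matrix.mul_assoc]
    rw [h2, hG]
    simp [Matrix.trace, Matrix.diag, Matrix.diagonal_mul]
  -- Frobenius norm squared
  have hfrob : frob D ^ 2 = trace (Dᵀ * D) := by
    rw [frob, Real.sq_sqrt (by positivity)]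
    simp only [Matrix.trace, Matrix.diag, Matrix.mul_apply, Matrix.transpose_apply, sq]
    rw [Finset.sum_comm]
  have htrM : trace M = ∑ i, M i i := rfl
  have htrMP : trace M = trace (D * P) := by
    rw [hMdef, Matrix.mul_assoc, Matrix.trace_mul_comm, Matrix.mul_assoc]
  have hDD : trace (D * D) = 2 * ∑ i, M i i := by
    have hexp : D * D = P * P - P * Q - (Q * P - Q * Q) := by
      rw [hDdef, Matrix.sub_mul, Matrix.mul_sub, Matrix.mul_sub]
    have hDP : D * P = P * P - Q * P := by rw [hDdef, Matrix.sub_mul]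
    have htrPQ : trace (P * Q) = trace (Q * P) := Matrix.trace_mul_comm P Q
    have htrP : trace P = trace (1 : Matrix (Fin r) (Fin r) ℝ) := by
      rw [hP, Matrix.trace_mul_comm, hU]
    have htrQ : trace Q = trace (1 : Matrix (Fin r) (Fin r) ℝ) := by
      rw [hQ, Matrix.trace_mul_comm, hW]
    have h1 : trace (D * D) = trace P - trace (Q * P) - (trace (Q * P) - trace Q) := by
      rw [hexp, trace_sub, trace_sub, trace_sub, hPP, hQQ, htrPQ]
    have h2 : (∑ i, M i i) = trace P - trace (Q * P) := by
      rw [← htrM, htrMP, hDP, trace_sub, hPP]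
    rw [h1, h2]
    linarith [htrP, htrQ]
  have hF : frob D ^ 2 = 2 * ∑ i, M i i := by rw [hfrob, hDt, hDD]
  rw [hTr, hF]
  have key1 : (l ⟨r - 1, by omega⟩) ^ 2 * ∑ i, M i i ≤ ∑ i, l i ^ 2 * M i i := by
    rw [Finset.mul_sum]
    apply Finset.sum_le_sum
    intro i _
    have hle : l ⟨r - 1, by omega⟩ ≤ l i := by
      apply hmono
      exact Fin.mk_le_mk.mpr (by omega)
    exact mul_le_mul_of_nonneg_right
      (pow_le_pow_left₀ (hpos _).le hle 2) (hMnn i)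
  have key2 : ∑ i, l i ^ 2 * M i i ≤ (l ⟨0, hr⟩) ^ 2 * ∑ i, M i i := by
    rw [Finset.mul_sum]
    apply Finset.sum_le_sum
    intro i _
    have hle : l i ≤ l ⟨0, hr⟩ := by
      apply hmono
      exact Fin.mk_le_mk.mpr (by omega)
    exact mul_le_mul_of_nonneg_right
      (pow_le_pow_left₀ (hpos _).le hle 2) (hMnn i)
  constructor
  · calc (l ⟨r - 1, by omega⟩) ^ 2 / 2 * (2 * ∑ i, M i i)
        = (l ⟨r - 1, by omega⟩) ^ 2 * ∑ i, M i i := by ring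
      _ ≤ _ := key1
  · calc ∑ i, l i ^ 2 * M i i ≤ (l ⟨0, hr⟩) ^ 2 * ∑ i, M i i := key2
      _ = (l ⟨0, hr⟩) ^ 2 / 2 * (2 * ∑ i, M i i) := by ring
end

section
/- (KL divergence between Gaussians with spiked covariances) Let Σ_i = t·U_i U_iᵀ + σ²I_p and Σ_j = t·U_j U_jᵀ + σ²I_p with U_i, U_j ∈ O(p,r), t, σ > 0. Then the KL divergence between N(0, Σ_i) and N(0, Σ_j) equals (t²/(2σ²(σ² + t)))·(r − ‖U_iᵀ U_j‖_F²). -/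
open Matrix

/-- KL divergence between the centered `p`-dimensional Gaussians `N(0, Σ0)`
and `N(0, Σ1)`: `(1/2)(tr(Σ1⁻¹Σ0) − p + log(det Σ1/det Σ0))`. -/
noncomputable def klGaussian {p : ℕ} (S0 S1 : Matrix (Fin p) (Fin p) ℝ) : ℝ :=
  (1 / 2) * (trace (S1⁻¹ * S0) - (p : ℝ) + Real.log (S1.det / S0.det))

lemma spiked_det {p r : ℕ} (U : Matrix (Fin p) (Fin r) ℝ) (hU : Uᵀ * U = 1)
    (t σ : ℝ) (hσ : σ ≠ 0) :
    (t • (U * Uᵀ) + σ ^ 2 • (1 : Matrix (Fin p) (Fin p) ℝ)).det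
      = (σ ^ 2) ^ p * (1 + t / σ ^ 2) ^ r := by
  have hσ2 : (σ ^ 2) ≠ 0 := pow_ne_zero _ hσ
  have h1 : t • (U * Uᵀ) + σ ^ 2 • (1 : Matrix (Fin p) (Fin p) ℝ)
      = σ ^ 2 • ((1 : Matrix (Fin p) (Fin p) ℝ) + ((t / σ ^ 2) • U) * Uᵀ) := by
    rw [smul_add, add_comm]
    congr 1
    rw [Matrix.smul_mul, smul_smul]
    congr 1
    field_simp
  rw [h1, Matrix.det_smul, Matrix.det_one_add_mul_comm]
  have h2 : (1 : Matrix (Fin r) (Fin r) ℝ) + Uᵀ * ((t / σ ^ 2) • U)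
      = (1 + t / σ ^ 2) • (1 : Matrix (Fin r) (Fin r) ℝ) := by
    rw [Matrix.mul_smul, hU, add_smul, one_smul]
  rw [h2, Matrix.det_smul, Matrix.det_one, mul_one]
  simp [Fintype.card_fin]

/-- KL divergence between spiked Gaussians `N(0, tU_iU_iᵀ + σ²I)` and
`N(0, tU_jU_jᵀ + σ²I)` equals `(t²/(2σ²(σ²+t)))(r − ‖U_iᵀU_j‖_F²)`. -/
theorem kl_spiked_gaussians {p r : ℕ}
    (Ui Uj : Matrix (Fin p) (Fin r) ℝ)
    (hUi : Uiᵀ * Ui = 1) (hUj : Ujᵀ * Uj = 1)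
    (t σ : ℝ) (ht : 0 < t) (hσ : 0 < σ) :
    klGaussian (t • (Ui * Uiᵀ) + σ ^ 2 • (1 : Matrix (Fin p) (Fin p) ℝ))
        (t • (Uj * Ujᵀ) + σ ^ 2 • (1 : Matrix (Fin p) (Fin p) ℝ)) =
      t ^ 2 / (2 * σ ^ 2 * (σ ^ 2 + t)) * ((r : ℝ) - frob (Uiᵀ * Uj) ^ 2) := by
  have hσ0 : σ ≠ 0 := hσ.ne'
  have hσ2 : (σ : ℝ) ^ 2 ≠ 0 := pow_ne_zero _ hσ0
  have hσ2pos : (0 : ℝ) < σ ^ 2 := pow_pos hσ 2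
  have hst : (σ : ℝ) ^ 2 + t ≠ 0 := by positivity
  set M : Matrix (Fin p) (Fin p) ℝ := Ui * Uiᵀ with hM
  set N : Matrix (Fin p) (Fin p) ℝ := Uj * Ujᵀ with hN
  set S0 : Matrix (Fin p) (Fin p) ℝ := t • M + σ ^ 2 • 1 with hS0
  set S1 : Matrix (Fin p) (Fin p) ℝ := t • N + σ ^ 2 • 1 with hS1
  set c : ℝ := t / (σ ^ 2 * (σ ^ 2 + t)) with hc
  set B : Matrix (Fin p) (Fin p) ℝ := (σ ^ 2)⁻¹ • 1 - c • N with hB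
  have hNN : N * N = N := by
    rw [hN, Matrix.mul_assoc, ← Matrix.mul_assoc Ujᵀ Uj Ujᵀ, hUj, Matrix.one_mul]
  -- inverse
  have hSB : S1 * B = 1 := by
    have expand : S1 * B
        = (t * (σ ^ 2)⁻¹ - t * c - σ ^ 2 * c) • N + (σ ^ 2 * (σ ^ 2)⁻¹) • 1 := by
      rw [hS1, hB]
      rw [Matrix.add_mul, Matrix.mul_sub, Matrix.mul_sub]
      simp only [Matrix.smul_mul, Matrix.mul_smul, Matrix.mul_one, Matrix.one_mul,
        smul_smul, hNN]
      module
    rw [expand]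
    have h0 : t * (σ ^ 2)⁻¹ - t * c - σ ^ 2 * c = 0 := by
      rw [hc]; field_simp; ring
    rw [h0, zero_smul, zero_add, mul_inv_cancel₀ hσ2, one_smul]
  have hinv : S1⁻¹ = B := Matrix.inv_eq_right_inv hSB
  -- traces
  have htrM : trace M = (r : ℝ) := by
    rw [hM, Matrix.trace_mul_comm, hUi, Matrix.trace_one]; simp
  have htrN : trace N = (r : ℝ) := by
    rw [hN, Matrix.trace_mul_comm, hUj, Matrix.trace_one]; simp
  have hfrob : frob (Uiᵀ * Uj) ^ 2 = ∑ i, ∑ j, ((Uiᵀ * Uj) i j) ^ 2 := by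
    rw [frob, Real.sq_sqrt]
    positivity
  have htrNM : trace (N * M) = frob (Uiᵀ * Uj) ^ 2 := by
    have h1 : N * M = Uj * ((Ujᵀ * Ui) * Uiᵀ) := by
      simp [hN, hM, Matrix.mul_assoc]
    rw [h1, Matrix.trace_mul_comm, hfrob]
    have h2 : Ujᵀ * Ui = (Uiᵀ * Uj)ᵀ := by
      rw [Matrix.transpose_mul, Matrix.transpose_transpose]
    rw [Matrix.mul_assoc (Ujᵀ * Ui), h2]
    simp only [Matrix.trace, Matrix.diag, Matrix.mul_apply, Matrix.transpose_apply]
    rw [Finset.sum_comm]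
    congr 1; ext i; congr 1; ext j; ring
  have htr : trace (S1⁻¹ * S0)
      = (σ ^ 2)⁻¹ * t * (r : ℝ) + (σ ^ 2)⁻¹ * σ ^ 2 * (p : ℝ)
        - c * t * frob (Uiᵀ * Uj) ^ 2 - c * σ ^ 2 * (r : ℝ) := by
    rw [hinv, hB, hS0]
    rw [Matrix.sub_mul, Matrix.smul_mul, Matrix.smul_mul, Matrix.one_mul]
    rw [Matrix.mul_add, Matrix.mul_smul, Matrix.mul_smul, Matrix.mul_one]
    simp only [smul_add, smul_smul, trace_sub, trace_add, trace_smul, smul_eq_mul,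
      htrM, htrN, htrNM, Matrix.trace_one, Fintype.card_fin]
    ring
  -- determinants
  have hdet0 := spiked_det Ui hUi t σ hσ0
  have hdet1 := spiked_det Uj hUj t σ hσ0
  have hlog : Real.log (S1.det / S0.det) = 0 := by
    rw [hS1, hS0, hdet0, hdet1]
    rcases eq_or_ne ((σ ^ 2) ^ p * (1 + t / σ ^ 2) ^ r) 0 with h | h
    · rw [h, div_zero, Real.log_zero]
    · rw [div_self h, Real.log_one]
  rw [klGaussian, htr, hlog, hfrob]
  rw [hc]
  field_simp
  ring
end

section
/- Let X ∈ R^{n×r}, Z ∈ R^{n×p}, U ∈ O(p,r), Γ^{1/2} = diag(√λ1,...,√λr) with λ1 ≥ ... ≥ λr > 0, and Û, U ∈ O(p,r). Then ⟨UΓ^{1/2}(n^{-1}XᵀX − I_r)Γ^{1/2}Uᵀ, ÛÛᵀ − UUᵀ⟩ ≤ (λ1/2)·‖n^{-1}XᵀX − I_r‖·‖UUᵀ − ÛÛᵀ‖_F², where ‖·‖ is the spectral norm. -/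
open Matrix

/-- Spectral (operator) norm of a square real matrix. -/
noncomputable def specNorm {r : ℕ} (M : Matrix (Fin r) (Fin r) ℝ) : ℝ :=
  ‖Matrix.toEuclideanCLM (𝕜 := ℝ) M‖

lemma quad_form_lower {r : ℕ} (M : Matrix (Fin r) (Fin r) ℝ) (v : Fin r → ℝ) :
    -(specNorm M * ∑ j, v j ^ 2) ≤ ∑ j, v j * (M.mulVec v) j := by
  set T := Matrix.toEuclideanCLM (𝕜 := ℝ) M with hT
  set x : EuclideanSpace ℝ (Fin r) := (WithLp.equiv 2 (Fin r → ℝ)).symm v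
  have hTx : T x = (WithLp.equiv 2 (Fin r → ℝ)).symm (M.mulVec v) := by
    simp [hT, x, Matrix.toLin'_apply]
  have hinner : (inner ℝ x (T x) : ℝ) = ∑ j, v j * (M.mulVec v) j := by
    rw [hTx]
    simp [PiLp.inner_apply, x, RCLike.inner_apply, mul_comm]
  have hns : ‖x‖ ^ 2 = ∑ j, v j ^ 2 := by
    rw [EuclideanSpace.norm_eq, Real.sq_sqrt (Finset.sum_nonneg fun i _ => sq_nonneg _)]
    simp [x]
  have h1 : |(inner ℝ x (T x) : ℝ)| ≤ ‖T‖ * ‖x‖ ^ 2 := by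
    calc |(inner ℝ x (T x) : ℝ)| ≤ ‖x‖ * ‖T x‖ := abs_real_inner_le_norm x (T x)
    _ ≤ ‖x‖ * (‖T‖ * ‖x‖) := by gcongr; exact T.le_opNorm x
    _ = ‖T‖ * ‖x‖ ^ 2 := by ring
  have h2 := (abs_le.mp h1).1
  rw [hinner, hns] at *
  have : specNorm M = ‖T‖ := rfl
  rw [this]
  linarith

/-- `⟨UΓ^{1/2}(n⁻¹XᵀX − I)Γ^{1/2}Uᵀ, ÛÛᵀ − UUᵀ⟩ ≤
(λ1/2)·‖n⁻¹XᵀX − I‖·‖UUᵀ − ÛÛᵀ‖_F²`. -/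
theorem sample_covariance_cross_term_bound {n p r : ℕ} (hr : 0 < r) (hn : 0 < n)
    (X : Matrix (Fin n) (Fin r) ℝ) (Z : Matrix (Fin n) (Fin p) ℝ)
    (U Uhat : Matrix (Fin p) (Fin r) ℝ)
    (hU : Uᵀ * U = 1) (hUhat : Uhatᵀ * Uhat = 1)
    (l : Fin r → ℝ) (hpos : ∀ i, 0 < l i)
    (hmono : ∀ i j : Fin r, i ≤ j → l j ≤ l i) :
    trace ((U * diagonal (fun i => Real.sqrt (l i)) *
          ((n : ℝ)⁻¹ • (Xᵀ * X) - 1) * diagonal (fun i => Real.sqrt (l i)) * Uᵀ)ᵀ *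
        (Uhat * Uhatᵀ - U * Uᵀ)) ≤
      (l ⟨0, hr⟩) / 2 * specNorm ((n : ℝ)⁻¹ • (Xᵀ * X) - 1) *
        frob (U * Uᵀ - Uhat * Uhatᵀ) ^ 2 := by
  set S : Matrix (Fin r) (Fin r) ℝ := (n : ℝ)⁻¹ • (Xᵀ * X) - 1 with hSdef
  set D : Matrix (Fin r) (Fin r) ℝ := diagonal (fun i => Real.sqrt (l i)) with hDdef
  set R : Matrix (Fin p) (Fin r) ℝ := (1 - Uhat * Uhatᵀ) * U with hRdef
  set C : Matrix (Fin p) (Fin r) ℝ := R * D with hCdef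
  have hS : Sᵀ = S := by
    simp [hSdef, transpose_sub, transpose_smul, transpose_mul]
  have hD : Dᵀ = D := by simp [hDdef]
  have hUU : ∀ A : Matrix (Fin r) (Fin r) ℝ, Uᵀ * (U * A) = A := fun A => by
    rw [← Matrix.mul_assoc, hU, Matrix.one_mul]
  have hUhU : ∀ A : Matrix (Fin r) (Fin r) ℝ, Uhatᵀ * (Uhat * A) = A := fun A => by
    rw [← Matrix.mul_assoc, hUhat, Matrix.one_mul]
  have hRtR : Rᵀ * R = 1 - Uᵀ * (Uhat * (Uhatᵀ * U)) := by
    simp only [hRdef, transpose_mul, transpose_sub, transpose_one, transpose_transpose]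
    simp only [Matrix.sub_mul, Matrix.mul_sub, Matrix.one_mul, Matrix.mul_one, Matrix.mul_assoc,
      hUhU, hU]
    abel
  have cyc : ∀ W : Matrix (Fin p) (Fin p) ℝ,
      trace (U * D * S * D * Uᵀ * W) = trace (S * (D * (Uᵀ * W * U) * D)) := by
    intro W
    rw [show U * D * S * D * Uᵀ * W = U * (D * S * D * Uᵀ * W) by
      simp [Matrix.mul_assoc]]
    rw [trace_mul_comm]
    rw [show D * S * D * Uᵀ * W * U = D * (S * (D * (Uᵀ * W * U))) by
      simp [Matrix.mul_assoc]]
    rw [trace_mul_comm]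
    simp [Matrix.mul_assoc]
  have hW : Uᵀ * (Uhat * Uhatᵀ - U * Uᵀ) * U = -(Rᵀ * R) := by
    rw [hRtR]
    simp only [Matrix.sub_mul, Matrix.mul_sub, Matrix.mul_assoc, hUU, hUhU]
    rw [hU]
    abel
  have htrans : (U * D * S * D * Uᵀ)ᵀ = U * D * S * D * Uᵀ := by
    simp only [transpose_mul, transpose_transpose, hS, hD, Matrix.mul_assoc]
  have step1 : trace ((U * D * S * D * Uᵀ)ᵀ * (Uhat * Uhatᵀ - U * Uᵀ)) =
      -(trace (S * (Cᵀ * C))) := by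
    rw [htrans, cyc, hW]
    have : Cᵀ * C = D * (Rᵀ * R) * D := by
      simp [hCdef, transpose_mul, hD, Matrix.mul_assoc]
    rw [this]
    simp [Matrix.mul_neg, Matrix.neg_mul, trace_neg]
  have step3 : -(trace (S * (Cᵀ * C))) ≤ specNorm S * trace (Cᵀ * C) := by
    have h1 : trace (S * (Cᵀ * C)) = ∑ i, ∑ j, C i j * (S.mulVec (fun k => C i k)) j := by
      rw [show S * (Cᵀ * C) = S * Cᵀ * C by rw [Matrix.mul_assoc], trace_mul_comm]
      simp only [trace, Matrix.diag, Matrix.mul_apply, mulVec, dotProduct, transpose_apply,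
        Finset.mul_sum, Finset.sum_mul]
    have h2 : trace (Cᵀ * C) = ∑ i, ∑ j, C i j ^ 2 := by
      simp only [trace, Matrix.diag, Matrix.mul_apply, transpose_apply, sq]
      rw [Finset.sum_comm]
    rw [h1, h2, Finset.mul_sum, ← Finset.sum_neg_distrib]
    refine Finset.sum_le_sum fun i _ => ?_
    have := quad_form_lower S (fun k => C i k)
    rw [Finset.mul_sum] at this ⊢
    linarith
  have hPdiag : ∀ i, (Rᵀ * R) i i = ∑ j, R j i ^ 2 := by
    intro i; simp [Matrix.mul_apply, transpose_apply, sq]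
  have hPnn : ∀ i, 0 ≤ (Rᵀ * R) i i := by
    intro i; rw [hPdiag]; positivity
  have hQ : trace (Cᵀ * C) = ∑ i, l i * (Rᵀ * R) i i := by
    have : Cᵀ * C = D * (Rᵀ * R) * D := by
      simp [hCdef, transpose_mul, hD, Matrix.mul_assoc]
    rw [this]
    simp only [trace, Matrix.diag, hDdef, Matrix.diagonal_mul, Matrix.mul_diagonal]
    refine Finset.sum_congr rfl fun i _ => ?_
    rw [show Real.sqrt (l i) * (Rᵀ * R) i i * Real.sqrt (l i)
        = Real.sqrt (l i) * Real.sqrt (l i) * (Rᵀ * R) i i by ring,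
      Real.mul_self_sqrt (hpos i).le]
  have step4 : trace (Cᵀ * C) ≤ l ⟨0, hr⟩ * trace (Rᵀ * R) := by
    rw [hQ, trace, Finset.mul_sum]
    apply Finset.sum_le_sum
    intro i _
    have : l i ≤ l ⟨0, hr⟩ := hmono ⟨0, hr⟩ i (by simp [Fin.le_def])
    exact mul_le_mul_of_nonneg_right this (hPnn i)
  have hA : (U * Uᵀ - Uhat * Uhatᵀ)ᵀ = U * Uᵀ - Uhat * Uhatᵀ := by
    simp [transpose_sub, transpose_mul]
  have hfrob : frob (U * Uᵀ - Uhat * Uhatᵀ) ^ 2 = 2 * trace (Rᵀ * R) := by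
    rw [frob, Real.sq_sqrt (by positivity)]
    have e1 : ∑ i, ∑ j, ((U * Uᵀ - Uhat * Uhatᵀ) i j) ^ 2
        = trace ((U * Uᵀ - Uhat * Uhatᵀ)ᵀ * (U * Uᵀ - Uhat * Uhatᵀ)) := by
      simp only [trace, Matrix.diag, Matrix.mul_apply, transpose_apply, sq]
      rw [Finset.sum_comm]
    rw [e1, hA, hRtR]
    have hUUU : U * Uᵀ * (U * Uᵀ) = U * Uᵀ := by
      rw [Matrix.mul_assoc, ← Matrix.mul_assoc Uᵀ, hU, Matrix.one_mul]
    have hUhUhUh : Uhat * Uhatᵀ * (Uhat * Uhatᵀ) = Uhat * Uhatᵀ := by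
      rw [Matrix.mul_assoc, ← Matrix.mul_assoc Uhatᵀ, hUhat, Matrix.one_mul]
    have expand : (U * Uᵀ - Uhat * Uhatᵀ) * (U * Uᵀ - Uhat * Uhatᵀ)
        = U * Uᵀ + Uhat * Uhatᵀ - U * Uᵀ * (Uhat * Uhatᵀ) - Uhat * Uhatᵀ * (U * Uᵀ) := by
      rw [Matrix.sub_mul, Matrix.mul_sub, Matrix.mul_sub, hUUU, hUhUhUh]
      abel
    rw [expand]
    have t1 : trace (U * Uᵀ) = (r : ℝ) := by
      rw [trace_mul_comm, hU, trace_one]; simp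
    have t2 : trace (Uhat * Uhatᵀ) = (r : ℝ) := by
      rw [trace_mul_comm, hUhat, trace_one]; simp
    have t3 : trace (U * Uᵀ * (Uhat * Uhatᵀ)) = trace (Uᵀ * (Uhat * (Uhatᵀ * U))) := by
      rw [show U * Uᵀ * (Uhat * Uhatᵀ) = U * (Uᵀ * (Uhat * Uhatᵀ)) by rw [Matrix.mul_assoc],
        trace_mul_comm]
      simp [Matrix.mul_assoc]
    have t4 : trace (Uhat * Uhatᵀ * (U * Uᵀ)) = trace (Uᵀ * (Uhat * (Uhatᵀ * U))) :=
      (trace_mul_comm _ _).trans t3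
    rw [trace_sub, trace_sub, trace_add, t1, t2, t3, t4, trace_sub, trace_one]
    simp
    ring
  rw [step1, hfrob]
  have hnorm : (0:ℝ) ≤ specNorm S := norm_nonneg _
  calc -(trace (S * (Cᵀ * C)))
      ≤ specNorm S * trace (Cᵀ * C) := step3
    _ ≤ specNorm S * (l ⟨0, hr⟩ * trace (Rᵀ * R)) := by
        apply mul_le_mul_of_nonneg_left step4 hnorm
    _ = l ⟨0, hr⟩ / 2 * specNorm S * (2 * trace (Rᵀ * R)) := by ring
end
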